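/- Second diskcyclicity criterion: Let T be a bounded operator on a separable Hilbert space H. Suppose there exist an increasing sequence {n_k} of integers and dense sets D₁, D₂ ⊆ H such that (a) for each y ∈ D₂ there is a sequence {x_k} in H with x_k → 0 and T^{n_k} x_k → y, and (b) ‖T^{n_k} x‖·‖x_k‖ → 0 for all x ∈ D₁ (with x_k as in (a)). Then T is diskcyclic. -/

import Mathlib

open Filter Topology Pointwise

/-- The disk orbit of `x` under `T`: `{α • Tⁿ x : n ≥ 0, α ∈ ℂ, |α| ≤ 1}`. -/
def diskOrbit {H : Type*} [NormedAddCommGroup H] [NormedSpace ℂ H]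
    (T : H →L[ℂ] H) (x : H) : Set H :=
  {y | ∃ (n : ℕ) (α : ℂ), ‖α‖ ≤ 1 ∧ y = α • (T ^ n) x}

/-- An operator is diskcyclic if some vector has dense disk orbit. -/
def DiskCyclic {H : Type*} [NormedAddCommGroup H] [NormedSpace ℂ H]
    (T : H →L[ℂ] H) : Prop :=
  ∃ x : H, Dense (diskOrbit T x)

theorem stmt10 {H : Type*} [NormedAddCommGroup H] [InnerProductSpace ℂ H] [CompleteSpace H]
    [TopologicalSpace.SeparableSpace H]
    (T : H →L[ℂ] H) (n : ℕ → ℕ) (hn : StrictMono n)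
    (D1 D2 : Set H) (hD1 : Dense D1) (hD2 : Dense D2)
    (xs : H → ℕ → H)
    (ha : ∀ y ∈ D2, Filter.Tendsto (xs y) Filter.atTop (nhds 0) ∧
      Filter.Tendsto (fun k => (T ^ n k) (xs y k)) Filter.atTop (nhds y))
    (hb : ∀ x ∈ D1, ∀ y ∈ D2,
      Filter.Tendsto (fun k => ‖(T ^ n k) x‖ * ‖xs y k‖) Filter.atTop (nhds 0)) :
    DiskCyclic T := by
  classical
  -- Step 1: disk-transitivity
  have key : ∀ U V : Set H, IsOpen U → U.Nonempty → IsOpen V → V.Nonempty →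
      ∃ z ∈ U, ∃ (m : ℕ) (α : ℂ), ‖α‖ ≤ 1 ∧ α • (T ^ m) z ∈ V := by
    intro U V hU hUne hV hVne
    obtain ⟨x₀, hx₀D, hx₀U⟩ := hD1.exists_mem_open hU hUne
    obtain ⟨y, hyD, hyV⟩ := hD2.exists_mem_open hV hVne
    obtain ⟨hxs0, hxsy⟩ := ha y hyD
    have hby := hb x₀ hx₀D y hyD
    set b : ℕ → ℝ := fun k => ‖(T ^ n k) x₀‖ with hbdef
    set c : ℕ → ℝ := fun k => ‖xs y k‖ with hcdef
    have hb0 : ∀ k, 0 ≤ b k := fun k => norm_nonneg _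
    have hc0 : ∀ k, 0 ≤ c k := fun k => norm_nonneg _
    set α : ℕ → ℝ := fun k => if b k ≤ c k then 1 else Real.sqrt (c k / b k) with hαdef
    have hα0 : ∀ k, 0 ≤ α k := by
      intro k; dsimp only [α]; split
      · norm_num
      · exact Real.sqrt_nonneg _
    have hα1 : ∀ k, α k ≤ 1 := by
      intro k; dsimp only [α]; split
      · exact le_refl 1
      · rename_i h
        have hbpos : 0 < b k := lt_of_le_of_lt (hc0 k) (not_le.mp h)
        have : c k / b k ≤ 1 := by
          rw [div_le_one hbpos]; exact (not_le.mp h).le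
        calc Real.sqrt (c k / b k) ≤ Real.sqrt 1 := Real.sqrt_le_sqrt this
          _ = 1 := Real.sqrt_one
    set M : ℕ → ℝ := fun k => c k + Real.sqrt (c k * b k) with hMdef
    have hc : Tendsto c atTop (𝓝 0) := by
      have := hxs0.norm
      simpa using this
    have hcb : Tendsto (fun k => c k * b k) atTop (𝓝 0) := by
      have : (fun k => c k * b k) = fun k => b k * c k := by
        funext k; ring
      rw [this]; exact hby
    have hM : Tendsto M atTop (𝓝 0) := by
      have hs : Tendsto (fun k => Real.sqrt (c k * b k)) atTop (𝓝 0) := by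
        have := (Real.continuous_sqrt.tendsto 0).comp hcb
        rw [Real.sqrt_zero] at this; exact this
      have := hc.add hs
      simpa using this
    have hbnd1 : ∀ k, α k * b k ≤ M k := by
      intro k; dsimp only [α, M]; split
      · rename_i h
        have : Real.sqrt 0 ≤ Real.sqrt (c k * b k) :=
          Real.sqrt_le_sqrt (by positivity)
        simp only [Real.sqrt_zero] at this
        nlinarith
      · rename_i h
        have hbpos : 0 < b k := lt_of_le_of_lt (hc0 k) (not_le.mp h)
        have : Real.sqrt (c k / b k) * b k = Real.sqrt (c k * b k) := by
          rw [Real.sqrt_div (hc0 k), Real.sqrt_mul (hc0 k)]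
          rw [div_mul_eq_mul_div, mul_comm]
          rw [← Real.sqrt_mul_self hbpos.le]
          rw [Real.sqrt_mul_self hbpos.le]
          field_simp
          ring_nf
          rw [Real.sq_sqrt hbpos.le]
          ring
        rw [this]
        nlinarith [hc0 k]
    have hbnd2 : ∀ k, ‖((α k : ℂ))⁻¹ • xs y k‖ ≤ M k := by
      intro k
      rw [norm_smul, norm_inv, Complex.norm_real, Real.norm_of_nonneg (hα0 k)]
      dsimp only [α, M]; split
      · rename_i h
        simp only [inv_one, one_mul]
        nlinarith [Real.sqrt_nonneg (c k * b k)]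
      · rename_i h
        have hbpos : 0 < b k := lt_of_le_of_lt (hc0 k) (not_le.mp h)
        rcases eq_or_lt_of_le (hc0 k) with hce | hcpos
        · rw [← hce]; simp
        · have hαpos : 0 < Real.sqrt (c k / b k) := Real.sqrt_pos.mpr (by positivity)
          have : (Real.sqrt (c k / b k))⁻¹ * c k = Real.sqrt (c k * b k) := by
            have hcs := Real.mul_self_sqrt (hc0 k)
            have h1 : Real.sqrt (c k) ≠ 0 := by positivity
            have h2 : Real.sqrt (b k) ≠ 0 := by positivity
            rw [Real.sqrt_div (hc0 k), Real.sqrt_mul (hc0 k), inv_div]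
            field_simp
            nlinarith [Real.sqrt_nonneg (c k), Real.sqrt_nonneg (b k)]
          rw [this]; nlinarith [hc0 k]
    set u : ℕ → H := fun k => x₀ + ((α k : ℂ))⁻¹ • xs y k with hudef
    have hu : Tendsto u atTop (𝓝 x₀) := by
      rw [tendsto_iff_norm_sub_tendsto_zero]
      apply squeeze_zero (fun k => norm_nonneg _) (fun k => ?_) hM
      dsimp only [u]
      rw [add_sub_cancel_left]
      exact hbnd2 k
    have heq : ∀ k, ((α k : ℂ)) • (T ^ n k) (u k)
        = ((α k : ℂ)) • (T ^ n k) x₀ + (T ^ n k) (xs y k) := by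
      intro k
      dsimp only [u]
      rw [map_add, map_smul, smul_add, smul_smul]
      rcases eq_or_ne (α k) 0 with hz | hz
      · have hxz : xs y k = 0 := by
          dsimp only [α] at hz
          split at hz
          · norm_num at hz
          · rename_i h
            have hbpos : 0 < b k := lt_of_le_of_lt (hc0 k) (not_le.mp h)
            have hle : c k / b k ≤ 0 := Real.sqrt_eq_zero'.mp hz
            have : c k / b k = 0 :=
              le_antisymm hle (div_nonneg (hc0 k) hbpos.le)
            have hc0' : c k = 0 := by
              field_simp at this; simpa using this
            exact norm_eq_zero.mp hc0'
        rw [hxz]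
        simp
      · have : (α k : ℂ) * ((α k : ℂ))⁻¹ = 1 := by
          apply mul_inv_cancel₀
          simpa using hz
        rw [this, one_smul]
    have hlim : Tendsto (fun k => ((α k : ℂ)) • (T ^ n k) (u k)) atTop (𝓝 y) := by
      have h1 : Tendsto (fun k => ((α k : ℂ)) • (T ^ n k) x₀) atTop (𝓝 0) := by
        rw [tendsto_zero_iff_norm_tendsto_zero]
        apply squeeze_zero (fun k => norm_nonneg _) (fun k => ?_) hM
        rw [norm_smul, Complex.norm_real, Real.norm_of_nonneg (hα0 k)]
        exact hbnd1 k
      have := h1.add hxsy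
      simp only [zero_add] at this
      apply this.congr
      intro k
      exact (heq k).symm
    have h1 : ∀ᶠ k in atTop, u k ∈ U := hu.eventually_mem (hU.mem_nhds hx₀U)
    have h2 : ∀ᶠ k in atTop, ((α k : ℂ)) • (T ^ n k) (u k) ∈ V :=
      hlim.eventually_mem (hV.mem_nhds hyV)
    obtain ⟨k, hk1, hk2⟩ := (h1.and h2).exists
    refine ⟨u k, hk1, n k, (α k : ℂ), ?_, hk2⟩
    rw [Complex.norm_real, Real.norm_of_nonneg (hα0 k)]
    exact hα1 k
  -- Step 2: Baire category argument
  obtain ⟨B, hBc, hBne, hBbasis⟩ := TopologicalSpace.exists_countable_basis H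
  set F : Set H → Set H := fun V => {z : H | ∃ (m : ℕ) (α : ℂ), ‖α‖ ≤ 1 ∧ α • (T ^ m) z ∈ V}
    with hFdef
  have hFopen : ∀ V, IsOpen V → IsOpen (F V) := by
    intro V hV
    have : F V = ⋃ (m : ℕ), ⋃ (α : ℂ), ⋃ (_ : ‖α‖ ≤ 1), (fun z => α • (T ^ m) z) ⁻¹' V := by
      ext z
      simp [F, Set.mem_iUnion]
    rw [this]
    apply isOpen_iUnion; intro m
    apply isOpen_iUnion; intro α
    apply isOpen_iUnion; intro hα
    exact hV.preimage (((T ^ m).continuous).const_smul α)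
  have hFdense : ∀ V ∈ B, Dense (F V) := by
    intro V hVB
    have hVopen : IsOpen V := hBbasis.isOpen hVB
    have hVne : V.Nonempty := by
      rcases Set.eq_empty_or_nonempty V with h | h
      · exact absurd (h ▸ hVB) hBne
      · exact h
    rw [dense_iff_inter_open]
    intro U hU hUne
    obtain ⟨z, hzU, m, α, hα, hzV⟩ := key U V hU hUne hVopen hVne
    exact ⟨z, hzU, m, α, hα, hzV⟩
  haveI : Countable ↥B := hBc.to_subtype
  have hdense : Dense (⋂ (V : B), F V) :=
    dense_iInter_of_isOpen (fun V => hFopen V (hBbasis.isOpen V.2)) (fun V => hFdense V V.2)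
  obtain ⟨x, hx⟩ := hdense.nonempty
  refine ⟨x, ?_⟩
  rw [dense_iff_inter_open]
  intro U hU hUne
  obtain ⟨w, hw⟩ := hUne
  obtain ⟨V, hVB, hwV, hVU⟩ := hBbasis.exists_subset_of_mem_open hw hU
  have hxV : x ∈ F V := Set.mem_iInter.mp hx ⟨V, hVB⟩
  obtain ⟨m, α, hα, hmem⟩ := hxV
  exact ⟨α • (T ^ m) x, hVU hmem, m, α, hα, rfl⟩
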